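/- Suppose the value Hessian at stage t+1 is a rank-one outer product, V_{xx}^{t+1} = z zᵀ for some z ∈ ℝ^{n'}. Let F_x ∈ ℝ^{n'×n}, F_u ∈ ℝ^{n'×m} be the layer Jacobians and Q_uu ∈ ℝ^{m×m} symmetric invertible. Define q_x = F_xᵀ z and q_u = F_uᵀ z. Then under the Gauss–Newton (first-order-dynamics) expansion, Q_xx := F_xᵀ V_{xx}^{t+1} F_x = q_x q_xᵀ, Q_ux := F_uᵀ V_{xx}^{t+1} F_x = q_u q_xᵀ, and the DDP value-Hessian update satisfies V_{xx}^t := Q_xx − Q_xu Q_uu⁻¹ Q_ux = (1 − q_uᵀ Q_uu⁻¹ q_u) q_x q_xᵀ; in particular Q_xx, Q_ux and V_{xx}^t are all outer products of the propagated vectors (of rank at most one). -/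

import Mathlib

open Matrix

lemma ddp_outer1 {n k npr : ℕ} (z : Fin npr → ℝ) (A : Matrix (Fin npr) (Fin k) ℝ)
    (B : Matrix (Fin npr) (Fin n) ℝ) :
    Aᵀ * vecMulVec z z * B = vecMulVec (Aᵀ *ᵥ z) (Bᵀ *ᵥ z) := by
  ext i j
  simp only [mul_apply, vecMulVec_apply, mulVec, dotProduct, transpose_apply,
    Finset.sum_mul, Finset.mul_sum]
  apply Finset.sum_congr rfl; intros
  apply Finset.sum_congr rfl; intros; ring

lemma ddp_outer2 {n m : ℕ} (a : Fin n → ℝ) (b c : Fin m → ℝ) (M : Matrix (Fin m) (Fin m) ℝ) :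
    vecMulVec a b * M * vecMulVec c a = (b ⬝ᵥ (M *ᵥ c)) • vecMulVec a a := by
  ext i j
  simp only [mul_apply, vecMulVec_apply, mulVec, dotProduct, Matrix.smul_apply, smul_eq_mul,
    Finset.sum_mul, Finset.mul_sum]
  rw [Finset.sum_comm]
  apply Finset.sum_congr rfl; intros
  apply Finset.sum_congr rfl; intros; ring

lemma ddp_rankOuter {n m : ℕ} (a : Fin n → ℝ) (b : Fin m → ℝ) : (vecMulVec a b).rank ≤ 1 := by
  rw [vecMulVec_eq Unit]
  calc (replicateCol Unit a * replicateRow Unit b).rank ≤ (replicateCol Unit a).rank := rank_mul_le_left _ _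
    _ ≤ 1 := by simpa using rank_le_card_width (replicateCol Unit a)

lemma ddp_smul_outer {n : ℕ} (c : ℝ) (a b : Fin n → ℝ) :
    c • vecMulVec a b = vecMulVec (c • a) b := by
  ext i j; simp [vecMulVec_apply, mul_assoc]

lemma ddp_outer_transpose {n m : ℕ} (a : Fin n → ℝ) (b : Fin m → ℝ) :
    (vecMulVec a b)ᵀ = vecMulVec b a := by
  ext i j; simp [vecMulVec_apply, mul_comm]

/-- If V_xx^{t+1} = z zᵀ is a rank-one outer product, then under the
Gauss–Newton expansion Q_xx = q_x q_xᵀ, Q_ux = q_u q_xᵀ, and the DDP value-Hessian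
update V_xx^t = Q_xx − Q_xu Q_uu⁻¹ Q_ux = (1 − q_uᵀQ_uu⁻¹q_u) q_x q_xᵀ, all of rank ≤ 1. -/
theorem ddp_outer_product_factorization {n npr m : ℕ}
    (z : Fin npr → ℝ)
    (Fx : Matrix (Fin npr) (Fin n) ℝ) (Fu : Matrix (Fin npr) (Fin m) ℝ)
    (Quu : Matrix (Fin m) (Fin m) ℝ)
    (hsymm : Quu.IsSymm) (hinv : IsUnit Quu.det) :
    let Vxx1 := vecMulVec z z
    let qx := Fxᵀ *ᵥ z
    let qu := Fuᵀ *ᵥ z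
    let Qxx := Fxᵀ * Vxx1 * Fx
    let Qux := Fuᵀ * Vxx1 * Fx
    let Vxxt := Qxx - Quxᵀ * Quu⁻¹ * Qux
    Qxx = vecMulVec qx qx ∧ Qux = vecMulVec qu qx
      ∧ Vxxt = (1 - qu ⬝ᵥ (Quu⁻¹ *ᵥ qu)) • vecMulVec qx qx
      ∧ Qxx.rank ≤ 1 ∧ Qux.rank ≤ 1 ∧ Vxxt.rank ≤ 1 := by
  intro Vxx1 qx qu Qxx Qux Vxxt
  have hQxx : Qxx = vecMulVec qx qx := ddp_outer1 z Fx Fx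
  have hQux : Qux = vecMulVec qu qx := ddp_outer1 z Fu Fx
  have hV : Vxxt = (1 - qu ⬝ᵥ (Quu⁻¹ *ᵥ qu)) • vecMulVec qx qx := by
    show Qxx - Quxᵀ * Quu⁻¹ * Qux = _
    rw [hQxx, hQux, ddp_outer_transpose, ddp_outer2, sub_smul, one_smul]
  refine ⟨hQxx, hQux, hV, ?_, ?_, ?_⟩
  · rw [hQxx]; exact ddp_rankOuter _ _
  · rw [hQux]; exact ddp_rankOuter _ _
  · rw [hV, ddp_smul_outer]; exact ddp_rankOuter _ _
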